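/- For q ≥ 0 and n ≥ 2, the bound (1+q²)‖A‖_F²‖B‖_F² for ‖AB − qBA‖_F² with A normal is sharp: for A = diag(1, −q, 0, …, 0) and B the matrix with b₁₂ = 1 and all other entries zero, ‖AB − qBA‖_F² = (1+q²)‖A‖_F²‖B‖_F² holds whenever ‖A‖_F² = s₁(A)² + s₂(A)², i.e. equality ‖[A,B]_q‖_F² = (1+q²)(1+q²)·1 is attained. -/

import Mathlib

open Matrix
open scoped BigOperators Matrix

noncomputable def frobSq {n : ℕ} (M : Matrix (Fin n) (Fin n) ℂ) : ℝ :=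
  ∑ i, ∑ j, ‖M i j‖ ^ 2

lemma frob_single {n : ℕ} (M : Matrix (Fin n) (Fin n) ℂ) (a b : Fin n)
    (h : ∀ i j, ¬(i = a ∧ j = b) → M i j = 0) :
    frobSq M = ‖M a b‖ ^ 2 := by
  unfold frobSq
  rw [Finset.sum_eq_single a]
  · rw [Finset.sum_eq_single b]
    · intro j _ hj
      rw [h a j (by tauto)]; simp
    · intro hb; exact absurd (Finset.mem_univ b) hb
  · intro i _ hi
    apply Finset.sum_eq_zero
    intro j _
    rw [h i j (by tauto)]; simp
  · intro ha; exact absurd (Finset.mem_univ a) ha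

theorem stmt_5 {n : ℕ} (hn : 2 ≤ n) (q : ℝ) (hq : 0 ≤ q)
    (A B : Matrix (Fin n) (Fin n) ℂ)
    (hA : A = Matrix.diagonal fun i : Fin n =>
      if (i : ℕ) = 0 then 1 else if (i : ℕ) = 1 then (-q : ℂ) else 0)
    (hB : B = Matrix.single (⟨0, by omega⟩ : Fin n) (⟨1, by omega⟩ : Fin n) 1) :
    frobSq (A * B - (q : ℂ) • (B * A)) = (1 + q ^ 2) * frobSq A * frobSq B ∧
    frobSq A = 1 + q ^ 2 ∧ frobSq B = 1 := by
  have h0 : (0:ℕ) < n := by omega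
  have h1 : (1:ℕ) < n := by omega
  set i0 : Fin n := ⟨0, h0⟩ with hi0
  set i1 : Fin n := ⟨1, h1⟩ with hi1
  have hne : i0 ≠ i1 := by simp [hi0, hi1, Fin.ext_iff]
  -- frobSq B
  have hBval : frobSq B = 1 := by
    rw [frob_single B i0 i1]
    · simp [hB]
    · intro i j hij
      simp only [hB, Matrix.single, Matrix.of_apply]
      rw [if_neg]
      tauto
  -- frobSq A
  have hAval : frobSq A = 1 + q ^ 2 := by
    unfold frobSq
    have hinner : ∀ i : Fin n, (∑ j, ‖A i j‖ ^ 2) = ‖A i i‖ ^ 2 := by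
      intro i
      rw [Finset.sum_eq_single i]
      · intro j _ hj
        simp [hA, Matrix.diagonal_apply_ne' _ hj]
      · intro h; exact absurd (Finset.mem_univ i) h
    simp only [hinner]
    rw [← Finset.sum_subset (Finset.subset_univ {i0, i1})]
    · rw [Finset.sum_pair hne]
      simp [hA, hi0, hi1, Matrix.diagonal_apply_eq, Complex.norm_real]

    · intro i _ hi
      simp only [Finset.mem_insert, Finset.mem_singleton] at hi
      push_neg at hi
      have h0' : (i : ℕ) ≠ 0 := by
        intro h; exact hi.1 (by simp [hi0, Fin.ext_iff, h])
      have h1' : (i : ℕ) ≠ 1 := by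
        intro h; exact hi.2 (by simp [hi1, Fin.ext_iff, h])
      simp [hA, Matrix.diagonal_apply_eq, h0', h1']
  -- commutator
  have hCval : frobSq (A * B - (q : ℂ) • (B * A)) = (1 + q ^ 2) ^ 2 := by
    have hEntry : ∀ i j, ¬(i = i0 ∧ j = i1) → (A * B - (q : ℂ) • (B * A)) i j = 0 := by
      intro i j hij
      have hBij : B i j = 0 := by
        simp only [hB, Matrix.single, Matrix.of_apply]
        rw [if_neg]; tauto
      simp [hA, Matrix.sub_apply, Matrix.smul_apply, Matrix.diagonal_mul, Matrix.mul_diagonal,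
        hBij]
    rw [frob_single _ i0 i1 hEntry]
    have : (A * B - (q : ℂ) • (B * A)) i0 i1 = (1 + q ^ 2 : ℝ) := by
      simp [hA, hB, Matrix.sub_apply, Matrix.smul_apply, Matrix.diagonal_mul,
        Matrix.mul_diagonal, hi0, hi1]
      push_cast
      ring
    rw [this]
    rw [Complex.norm_real, Real.norm_eq_abs]
    rw [abs_of_nonneg (by positivity)]
  refine ⟨?_, hAval, hBval⟩
  rw [hCval, hAval, hBval]
  ring
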